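/- arXiv:2412.04155 — 4 statements merged into one kernel-verified Lean document; each statement's English description precedes it below -/
import Mathlib

section
/- If F : P × X ⇒ Y is C-concave with respect to a convex cone C, then the function (p,x) ↦ e(F(p,x), C) = sup_{y ∈ F(p,x)} dist(y, C) is convex on P × X. -/
open Pointwise Metric ENNReal

/-- If `F : P × X ⇒ Y` is `C`-concave with respect to a nonempty convex cone `C`,
then `(p,x) ↦ e(F(p,x), C) = sup_{y ∈ F(p,x)} dist(y, C)` is convex
(in the extended-real sense). -/
theorem stmt_4 {P X Y : Type*}
    [NormedAddCommGroup P] [NormedSpace ℝ P]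
    [NormedAddCommGroup X] [NormedSpace ℝ X]
    [NormedAddCommGroup Y] [NormedSpace ℝ Y]
    (C : Set Y) (hne : C.Nonempty) (hC : Convex ℝ C)
    (hCone : ∀ t : ℝ, 0 < t → ∀ c ∈ C, t • c ∈ C)
    (F : P → X → Set Y)
    (hF : ∀ p₁ x₁ p₂ x₂, ∀ t ∈ Set.Icc (0:ℝ) 1,
      F (t • p₁ + (1 - t) • p₂) (t • x₁ + (1 - t) • x₂)
        ⊆ t • F p₁ x₁ + (1 - t) • F p₂ x₂ + C)
    (e : P → X → ℝ≥0∞)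
    (he : ∀ p x, e p x = ⨆ y ∈ F p x, ENNReal.ofReal (infDist y C)) :
    ∀ p₁ x₁ p₂ x₂, ∀ t ∈ Set.Icc (0:ℝ) 1,
      e (t • p₁ + (1 - t) • p₂) (t • x₁ + (1 - t) • x₂)
        ≤ ENNReal.ofReal t * e p₁ x₁ + ENNReal.ofReal (1 - t) * e p₂ x₂ := by
  intro p₁ x₁ p₂ x₂ t ht
  obtain ⟨ht0, ht1⟩ := ht
  have ht1' : (0:ℝ) ≤ 1 - t := by linarith
  have haddC : ∀ u ∈ C, ∀ v ∈ C, u + v ∈ C := by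
    intro u hu v hv
    have hmid : (1/2 : ℝ) • u + (1/2 : ℝ) • v ∈ C :=
      hC hu hv (by norm_num) (by norm_num) (by norm_num)
    have h2 : (2:ℝ) • ((1/2 : ℝ) • u + (1/2 : ℝ) • v) ∈ C :=
      hCone 2 (by norm_num) _ hmid
    have : (2:ℝ) • ((1/2 : ℝ) • u + (1/2 : ℝ) • v) = u + v := by
      rw [smul_add, smul_smul, smul_smul]; norm_num
    rwa [this] at h2
  rw [he, he, he]
  refine iSup₂_le fun y hy => ?_
  obtain ⟨z, hz, c, hc, rfl⟩ := hF p₁ x₁ p₂ x₂ t ⟨ht0, ht1⟩ hy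
  obtain ⟨z₁, hz₁, z₂, hz₂, rfl⟩ := hz
  obtain ⟨a, ha, rfl⟩ := hz₁
  obtain ⟨b, hb, rfl⟩ := hz₂
  have key : infDist (t • a + (1 - t) • b + c) C
      ≤ t * infDist a C + (1 - t) * infDist b C := by
    refine le_of_forall_pos_le_add fun ε hε => ?_
    obtain ⟨c₁, hc₁, hd₁⟩ := (Metric.infDist_lt_iff hne).mp
      (show infDist a C < infDist a C + ε by linarith)
    obtain ⟨c₂, hc₂, hd₂⟩ := (Metric.infDist_lt_iff hne).mp
      (show infDist b C < infDist b C + ε by linarith)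
    have hmem : t • c₁ + (1 - t) • c₂ + c ∈ C :=
      haddC _ (hC hc₁ hc₂ ht0 ht1' (by ring)) _ hc
    have hle := Metric.infDist_le_dist_of_mem (x := t • a + (1 - t) • b + c) hmem
    have hdist : dist (t • a + (1 - t) • b + c) (t • c₁ + (1 - t) • c₂ + c)
        ≤ t * dist a c₁ + (1 - t) * dist b c₂ := by
      rw [dist_eq_norm]
      have heq : (t • a + (1 - t) • b + c) - (t • c₁ + (1 - t) • c₂ + c)
          = t • (a - c₁) + (1 - t) • (b - c₂) := by
        rw [smul_sub, smul_sub]; abel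
      rw [heq]
      calc ‖t • (a - c₁) + (1 - t) • (b - c₂)‖
          ≤ ‖t • (a - c₁)‖ + ‖(1 - t) • (b - c₂)‖ := norm_add_le _ _
        _ = t * dist a c₁ + (1 - t) * dist b c₂ := by
            rw [norm_smul, norm_smul, Real.norm_of_nonneg ht0,
              Real.norm_of_nonneg ht1', dist_eq_norm, dist_eq_norm]
    have h1 : t * dist a c₁ ≤ t * (infDist a C + ε) :=
      mul_le_mul_of_nonneg_left hd₁.le ht0
    have h2 : (1 - t) * dist b c₂ ≤ (1 - t) * (infDist b C + ε) :=
      mul_le_mul_of_nonneg_left hd₂.le ht1'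
    nlinarith [hle, hdist]
  calc ENNReal.ofReal (infDist (t • a + (1 - t) • b + c) C)
      ≤ ENNReal.ofReal (t * infDist a C + (1 - t) * infDist b C) :=
        ENNReal.ofReal_le_ofReal key
    _ ≤ ENNReal.ofReal (t * infDist a C) + ENNReal.ofReal ((1 - t) * infDist b C) :=
        ENNReal.ofReal_add_le
    _ = ENNReal.ofReal t * ENNReal.ofReal (infDist a C)
        + ENNReal.ofReal (1 - t) * ENNReal.ofReal (infDist b C) := by
        rw [ENNReal.ofReal_mul ht0, ENNReal.ofReal_mul ht1']
    _ ≤ ENNReal.ofReal t * (⨆ y ∈ F p₁ x₁, ENNReal.ofReal (infDist y C))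
        + ENNReal.ofReal (1 - t) * (⨆ y ∈ F p₂ x₂, ENNReal.ofReal (infDist y C)) := by
        gcongr
        · exact le_iSup₂_of_le a ha le_rfl
        · exact le_iSup₂_of_le b hb le_rfl
end

section
/- For a bounded linear operator Λ : X → Y between Banach spaces, the exact bound of open covering sur(Λ) = sup { η > 0 : Λ(B_X) ⊇ η·B_Y } (with sup ∅ = 0) equals dist(0, Λ*(B_{Y*})) computed as inf_{‖y*‖=1} ‖Λ* y*‖, where Λ* is the adjoint operator. -/
open Metric NormedSpace

/-- Iteration scheme: if every `y` lies in the closure of the image of the ball of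
radius `c * ‖y‖`, then (by completeness of the domain) every `y` has an exact preimage
of norm at most `c' * ‖y‖`, for every `c' > c`. -/
lemma surj_of_closure_aux {X Y : Type*}
    [NormedAddCommGroup X] [NormedSpace ℝ X] [CompleteSpace X]
    [NormedAddCommGroup Y] [NormedSpace ℝ Y]
    (Λ : X →L[ℝ] Y) {c c' : ℝ} (hc : 0 ≤ c) (hcc' : c < c')
    (H : ∀ y : Y, y ∈ closure (Λ '' closedBall 0 (c * ‖y‖))) :
    ∀ y : Y, ∃ x : X, Λ x = y ∧ ‖x‖ ≤ c' * ‖y‖ := by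
  have hc' : 0 < c' := lt_of_le_of_lt hc hcc'
  set ε : ℝ := (c' - c) / (2 * c') with hε
  have hε0 : 0 < ε := div_pos (by linarith) (by positivity)
  have hε1 : ε < 1 := by
    rw [hε, div_lt_one (by positivity)]
    linarith
  have hεval : c' * ε = (c' - c) / 2 := by
    rw [hε]; field_simp
  have hgeom : c / (1 - ε) ≤ c' := by
    rw [div_le_iff₀ (by linarith), mul_sub, mul_one, hεval]
    linarith
  have key : ∀ y : Y, ∃ x : X, ‖x‖ ≤ c * ‖y‖ ∧ ‖y - Λ x‖ ≤ ε * ‖y‖ := by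
    intro y
    rcases eq_or_ne y 0 with rfl | hy
    · exact ⟨0, by simp, by simp⟩
    · have hy' : 0 < ε * ‖y‖ := mul_pos hε0 (norm_pos_iff.2 hy)
      rcases Metric.mem_closure_iff.1 (H y) _ hy' with ⟨z, hz, hdz⟩
      rcases hz with ⟨x, hx, rfl⟩
      rw [mem_closedBall, dist_zero_right] at hx
      exact ⟨x, hx, by rw [← dist_eq_norm]; exact hdz.le⟩
  choose g hg using key
  intro y
  set h : Y → Y := fun y => y - Λ (g y) with hh
  have hle : ∀ z, ‖h z‖ ≤ ε * ‖z‖ := fun z => (hg z).2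
  have hnle : ∀ n : ℕ, ‖h^[n] y‖ ≤ ε ^ n * ‖y‖ := by
    intro n
    induction n with
    | zero => simp
    | succ n IH =>
      rw [Function.iterate_succ']
      refine le_trans (hle _) ?_
      rw [pow_succ', mul_assoc]
      exact mul_le_mul_of_nonneg_left IH hε0.le
  set u : ℕ → X := fun n => g (h^[n] y) with hu
  have ule : ∀ n, ‖u n‖ ≤ ε ^ n * (c * ‖y‖) := fun n => by
    refine le_trans (hg _).1 ?_
    calc c * ‖h^[n] y‖ ≤ c * (ε ^ n * ‖y‖) := mul_le_mul_of_nonneg_left (hnle n) hc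
      _ = ε ^ n * (c * ‖y‖) := by ring
  have sNu : Summable fun n => ‖u n‖ := by
    refine Summable.of_nonneg_of_le (fun n => norm_nonneg _) ule ?_
    exact (summable_geometric_of_lt_one hε0.le hε1).mul_right _
  have su : Summable u := sNu.of_norm
  set x := tsum u with hx
  have x_ineq : ‖x‖ ≤ c' * ‖y‖ := by
    calc ‖x‖ ≤ ∑' n, ‖u n‖ := norm_tsum_le_tsum_norm sNu
      _ ≤ ∑' n, ε ^ n * (c * ‖y‖) :=
          Summable.tsum_le_tsum ule sNu ((summable_geometric_of_lt_one hε0.le hε1).mul_right _)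
      _ = (∑' n, ε ^ n) * (c * ‖y‖) := tsum_mul_right
      _ = (1 - ε)⁻¹ * (c * ‖y‖) := by rw [tsum_geometric_of_lt_one hε0.le hε1]
      _ = c / (1 - ε) * ‖y‖ := by field_simp
      _ ≤ c' * ‖y‖ := mul_le_mul_of_nonneg_right hgeom (norm_nonneg _)
  have fsumeq : ∀ n : ℕ, Λ (∑ i ∈ Finset.range n, u i) = y - h^[n] y := by
    intro n
    induction n with
    | zero => simp
    | succ n IH =>
      rw [Finset.sum_range_succ, map_add, IH, Function.iterate_succ_apply']
      show y - h^[n] y + Λ (g (h^[n] y)) = y - (h^[n] y - Λ (g (h^[n] y)))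
      abel
  have L₁ : Filter.Tendsto (fun n => Λ (∑ i ∈ Finset.range n, u i)) Filter.atTop (nhds (Λ x)) :=
    (Λ.continuous.tendsto _).comp su.hasSum.tendsto_sum_nat
  simp only [fsumeq] at L₁
  have L₂ : Filter.Tendsto (fun n => y - h^[n] y) Filter.atTop (nhds (y - 0)) := by
    refine tendsto_const_nhds.sub ?_
    rw [tendsto_iff_norm_sub_tendsto_zero]
    simp only [sub_zero]
    refine squeeze_zero (fun _ => norm_nonneg _) hnle ?_
    rw [← zero_mul ‖y‖]
    exact (tendsto_pow_atTop_nhds_zero_of_lt_one hε0.le hε1).mul tendsto_const_nhds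
  have feq : Λ x = y - 0 := tendsto_nhds_unique L₁ L₂
  rw [sub_zero] at feq
  exact ⟨x, feq, x_ineq⟩

/-- For a bounded linear operator `Λ : X → Y` between Banach spaces, the exact
bound of open covering `sur(Λ) = sup {η > 0 : Λ(B_X) ⊇ η B_Y}` (with `sup ∅ = 0`)
equals the Banach constant of the adjoint, `inf_{‖y*‖ = 1} ‖Λ* y*‖`. -/
theorem stmt_9 {X Y : Type*}
    [NormedAddCommGroup X] [NormedSpace ℝ X] [CompleteSpace X]
    [NormedAddCommGroup Y] [NormedSpace ℝ Y] [CompleteSpace Y]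
    (Λ : X →L[ℝ] Y) :
    sSup {η : ℝ | 0 < η ∧ closedBall (0 : Y) η ⊆ Λ '' closedBall (0 : X) 1}
      = sInf {r : ℝ | ∃ y' : StrongDual ℝ Y, ‖y'‖ = 1 ∧ r = ‖y'.comp Λ‖} := by
  set S := {η : ℝ | 0 < η ∧ closedBall (0 : Y) η ⊆ Λ '' closedBall (0 : X) 1} with hS
  set T := {r : ℝ | ∃ y' : StrongDual ℝ Y, ‖y'‖ = 1 ∧ r = ‖y'.comp Λ‖} with hT
  rcases subsingleton_or_nontrivial Y with hY | hY
  · -- degenerate case: Y trivial, both sides are 0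
    have hTe : T = ∅ := by
      ext r
      simp only [hT, Set.mem_setOf_eq, Set.mem_empty_iff_false, iff_false]
      rintro ⟨y', hy', -⟩
      have : y' = 0 := Subsingleton.elim _ _
      rw [this, norm_zero] at hy'
      norm_num at hy'
    have hSe : S = Set.Ioi 0 := by
      ext η
      simp only [hS, Set.mem_setOf_eq, Set.mem_Ioi]
      refine ⟨fun h => h.1, fun h => ⟨h, fun y _ => ?_⟩⟩
      have : y = Λ 0 := Subsingleton.elim _ _
      exact ⟨0, mem_closedBall_self zero_le_one, this.symm⟩
    rw [hTe, hSe, Real.sInf_empty, Real.sSup_of_not_bddAbove (not_bddAbove_Ioi (a := (0:ℝ)))]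
  · -- main case
    have hTne : T.Nonempty := by
      obtain ⟨y, hy⟩ := exists_ne (0 : Y)
      obtain ⟨g, hg1, -⟩ := exists_dual_vector ℝ y (norm_ne_zero_iff.2 hy)
      exact ⟨‖g.comp Λ‖, g, hg1, rfl⟩
    have hTbdd : BddBelow T := ⟨0, by rintro r ⟨y', -, rfl⟩; exact norm_nonneg _⟩
    set I := sInf T with hI
    have hI0 : 0 ≤ I := le_csInf hTne (by rintro r ⟨y', -, rfl⟩; exact norm_nonneg _)
    -- every element of S is ≤ every element of T
    have hST : ∀ η ∈ S, ∀ r ∈ T, η ≤ r := by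
      rintro η ⟨hη, hcov⟩ r ⟨y', hy'1, rfl⟩
      -- show η ≤ ‖y'.comp Λ‖ using that ‖y'‖ = 1
      have hb : ‖y'‖ ≤ ‖y'.comp Λ‖ / η := by
        refine y'.opNorm_le_bound (by positivity) fun y => ?_
        rcases eq_or_ne y 0 with rfl | hy
        · simp
        · have hyn : 0 < ‖y‖ := norm_pos_iff.2 hy
          set z := (η / ‖y‖) • y with hz
          have hzball : z ∈ closedBall (0 : Y) η := by
            rw [mem_closedBall, dist_zero_right, hz, norm_smul, Real.norm_eq_abs,
              abs_of_pos (by positivity)]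
            rw [div_mul_cancel₀ _ hyn.ne']
          obtain ⟨x, hx, hΛx⟩ := hcov hzball
          rw [mem_closedBall, dist_zero_right] at hx
          have : y' z = (y'.comp Λ) x := by rw [← hΛx]; rfl
          have hbz : ‖y' z‖ ≤ ‖y'.comp Λ‖ := by
            rw [this]
            calc ‖(y'.comp Λ) x‖ ≤ ‖y'.comp Λ‖ * ‖x‖ := (y'.comp Λ).le_opNorm x
              _ ≤ ‖y'.comp Λ‖ * 1 := by
                  exact mul_le_mul_of_nonneg_left hx (norm_nonneg _)
              _ = ‖y'.comp Λ‖ := mul_one _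
          have hyz : y' z = (η / ‖y‖) * y' y := by rw [hz, map_smul]; rfl
          rw [hyz, Real.norm_eq_abs, abs_mul, abs_of_pos (by positivity)] at hbz
          calc ‖y' y‖ = (‖y‖ / η) * ((η / ‖y‖) * |y' y|) := by
                rw [Real.norm_eq_abs]; field_simp
            _ ≤ (‖y‖ / η) * ‖y'.comp Λ‖ := by
                exact mul_le_mul_of_nonneg_left hbz (by positivity)
            _ = ‖y'.comp Λ‖ / η * ‖y‖ := by ring
      rw [hy'1] at hb
      rw [le_div_iff₀ hη, one_mul] at hb
      linarith
    have hSbdd : BddAbove S := by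
      obtain ⟨r, hr⟩ := hTne
      exact ⟨r, fun η hη => hST η hη r hr⟩
    -- sSup S ≤ I
    have h1 : sSup S ≤ I := by
      rcases S.eq_empty_or_nonempty with hSe | hSne
      · rw [hSe, Real.sSup_empty]; exact hI0
      · exact csSup_le hSne fun η hη => le_csInf hTne (hST η hη)
    -- I ≤ sSup S
    have h2 : I ≤ sSup S := by
      rcases eq_or_lt_of_le hI0 with hI0' | hIpos
      · rw [← hI0']
        exact Real.sSup_nonneg fun η hη => hη.1.le
      -- Step 1: closure covering
      have hclos : ∀ y : Y, y ∈ closure (Λ '' closedBall 0 (I⁻¹ * ‖y‖)) := by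
        intro y
        by_contra hy
        have hy0 : y ≠ 0 := by
          rintro rfl
          refine hy (subset_closure ⟨0, ?_, map_zero Λ⟩)
          simp
        have hyn : 0 < ‖y‖ := norm_pos_iff.2 hy0
        set r : ℝ := I⁻¹ * ‖y‖ with hr
        have hrpos : 0 < r := by positivity
        have hconv : Convex ℝ (closure (Λ '' closedBall (0 : X) r)) :=
          ((convex_closedBall (0 : X) r).linear_image Λ.toLinearMap).closure
        obtain ⟨f, u, hfu, huy⟩ := geometric_hahn_banach_closed_point hconv isClosed_closure hy
        have hu0 : 0 < u := by
          have h0 : f 0 < u := hfu 0 (subset_closure ⟨0, by simp [hrpos.le], map_zero Λ⟩)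
          simpa using h0
        -- |f (Λ x)| < u for x in closed ball of radius r
        have habs : ∀ x ∈ closedBall (0 : X) r, |f (Λ x)| ≤ u := by
          intro x hx
          have hx' : -x ∈ closedBall (0 : X) r := by
            rw [mem_closedBall, dist_zero_right, norm_neg]
            rwa [mem_closedBall, dist_zero_right] at hx
          have h1' : f (Λ x) < u := hfu _ (subset_closure ⟨x, hx, rfl⟩)
          have h2' : f (Λ (-x)) < u := hfu _ (subset_closure ⟨-x, hx', rfl⟩)
          rw [map_neg, map_neg] at h2'
          rw [abs_le]
          constructor <;> linarith
        -- bound on ‖f.comp Λ‖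
        have hfΛ : ‖f.comp Λ‖ ≤ u * I / ‖y‖ := by
          refine (f.comp Λ).opNorm_le_bound (by positivity) fun x => ?_
          rcases eq_or_ne x 0 with rfl | hx
          · simp
          · have hxn : 0 < ‖x‖ := norm_pos_iff.2 hx
            set z := (r / ‖x‖) • x with hz
            have hzball : z ∈ closedBall (0 : X) r := by
              rw [mem_closedBall, dist_zero_right, hz, norm_smul, Real.norm_eq_abs,
                abs_of_pos (by positivity), div_mul_cancel₀ _ hxn.ne']
            have hbz := habs z hzball
            have hfz : f (Λ z) = (r / ‖x‖) * f (Λ x) := by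
              rw [hz, map_smul, map_smul]; rfl
            rw [hfz, abs_mul, abs_of_pos (by positivity)] at hbz
            have hcalc : |f (Λ x)| = (‖x‖ / r) * ((r / ‖x‖) * |f (Λ x)|) := by field_simp
            show ‖(f.comp Λ) x‖ ≤ u * I / ‖y‖ * ‖x‖
            have hfcx : ‖(f.comp Λ) x‖ = |f (Λ x)| := rfl
            rw [hfcx, hcalc]
            calc (‖x‖ / r) * ((r / ‖x‖) * |f (Λ x)|) ≤ (‖x‖ / r) * u :=
                  mul_le_mul_of_nonneg_left hbz (by positivity)
              _ = u * I / ‖y‖ * ‖x‖ := by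
                  rw [hr]; field_simp
        -- f y > u gives ‖f‖ > u / ‖y‖
        have hfy : u < f y := huy
        have hfn : u / ‖y‖ < ‖f‖ := by
          have : f y ≤ ‖f‖ * ‖y‖ := by
            calc f y ≤ |f y| := le_abs_self _
              _ = ‖f y‖ := (Real.norm_eq_abs _).symm
              _ ≤ ‖f‖ * ‖y‖ := f.le_opNorm y
          rw [div_lt_iff₀ hyn]
          linarith
        have hfpos : 0 < ‖f‖ := lt_trans (by positivity) hfn
        -- normalize
        set g : StrongDual ℝ Y := ‖f‖⁻¹ • f with hg
        have hg1 : ‖g‖ = 1 := by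
          rw [hg, norm_smul, Real.norm_eq_abs, abs_of_pos (by positivity),
            inv_mul_cancel₀ hfpos.ne']
        have hgΛ : ‖g.comp Λ‖ < I := by
          have hgc : g.comp Λ = ‖f‖⁻¹ • (f.comp Λ) := by
            rw [hg, ContinuousLinearMap.smul_comp]
          rw [hgc, norm_smul, Real.norm_eq_abs, abs_of_pos (by positivity)]
          calc ‖f‖⁻¹ * ‖f.comp Λ‖ ≤ ‖f‖⁻¹ * (u * I / ‖y‖) :=
                mul_le_mul_of_nonneg_left hfΛ (by positivity)
            _ < (u / ‖y‖)⁻¹ * (u * I / ‖y‖) := by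
                refine mul_lt_mul_of_pos_right ?_ (by positivity)
                exact inv_strictAnti₀ (by positivity) hfn
            _ = I := by field_simp
        have : I ≤ ‖g.comp Λ‖ := csInf_le hTbdd ⟨g, hg1, rfl⟩
        linarith
      -- Step 2: for every 0 < η < I, η ∈ S
      have hmem : ∀ η : ℝ, 0 < η → η < I → η ∈ S := by
        intro η hη hηI
        refine ⟨hη, fun y hy => ?_⟩
        have hcc' : I⁻¹ < η⁻¹ := by
          exact inv_strictAnti₀ hη hηI
        have H := surj_of_closure_aux Λ (by positivity) hcc' hclos
        obtain ⟨x, hΛx, hxn⟩ := H y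
        refine ⟨x, ?_, hΛx⟩
        rw [mem_closedBall, dist_zero_right] at hy ⊢
        calc ‖x‖ ≤ η⁻¹ * ‖y‖ := hxn
          _ ≤ η⁻¹ * η := mul_le_mul_of_nonneg_left hy (by positivity)
          _ = 1 := inv_mul_cancel₀ hη.ne'
      refine le_of_forall_lt fun c hc => ?_
      rcases le_or_gt c 0 with hc0 | hc0
      · exact lt_of_le_of_lt hc0 (lt_of_lt_of_le (by linarith : (0:ℝ) < I/2)
          (le_csSup hSbdd (hmem (I/2) (by linarith) (by linarith))))
      · exact lt_of_lt_of_le (by linarith : c < (c + I)/2)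
          (le_csSup hSbdd (hmem ((c + I)/2) (by linarith) (by linarith)))
    linarith
end

section
/- Calm problems admit penalty functions: let φ : P × X → ℝ, F : P × X ⇒ Y, C ⊆ Y a closed convex cone, p̄ ∈ P, and let x̄ be a local minimizer of φ(p̄, ·) over S(p̄) = {x : F(p̄,x) ⊆ C}. Assume (i) φ(p̄, ·) is lower semicontinuous at x̄; (ii) there exist γ, r_γ > 0 with φ(p,x) − φ(p̄,x) ≤ γ‖p − p̄‖ for all p ∈ B(p̄, r_γ), x ∈ B(x̄, r_γ); (iii) there exist β, r_β > 0 with dist(p̄, {q : F(q,x) ⊆ C}) ≤ β·e(F(p̄,x), C) for all x ∈ B(x̄, r_β); (iv) the problem at p̄ is calm at x̄. Then there exists λ* ≥ 0 such that for every λ > λ*, x̄ is an unconstrained local minimizer of x ↦ φ(p̄, x) + λ·e(F(p̄, x), C). -/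
open Metric EMetric Set ENNReal

/-- Calm problems admit penalty functions: under lower semicontinuity of
`φ(p̄,·)` at `x̄`, uniform calmness from above of `φ(·,x)` at `p̄`, a uniform
metric-subregularity bound for the feasible map, and calmness of the problem
at `x̄`, there exists `λ* ≥ 0` such that for every `λ > λ*` the point `x̄` is an
unconstrained local minimizer of `x ↦ φ(p̄,x) + λ·e(F(p̄,x), C)`. -/
theorem stmt_17 {P X Y : Type*}
    [NormedAddCommGroup P] [NormedSpace ℝ P] [CompleteSpace P]
    [NormedAddCommGroup X] [NormedSpace ℝ X] [CompleteSpace X]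
    [NormedAddCommGroup Y] [NormedSpace ℝ Y] [CompleteSpace Y]
    (C : Set Y) (hCcl : IsClosed C) (hC : Convex ℝ C)
    (hCone : ∀ t : ℝ, 0 < t → ∀ c ∈ C, t • c ∈ C)
    (φ : P → X → ℝ) (F : P → X → Set Y)
    (S : P → Set X) (hS : ∀ p, S p = {x : X | F p x ⊆ C})
    (exc : P → X → ℝ≥0∞)
    (hexc : ∀ p x, exc p x = ⨆ y ∈ F p x, ENNReal.ofReal (infDist y C))
    (pb : P) (xb : X) (hfeas : xb ∈ S pb)
    -- x̄ is a local minimizer of φ(p̄,·) over S(p̄)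
    (hlocmin : ∃ ρ > (0:ℝ), ∀ x ∈ S pb ∩ ball xb ρ, φ pb xb ≤ φ pb x)
    -- (i) lower semicontinuity of φ(p̄,·) at x̄
    (hlsc : LowerSemicontinuousAt (fun x => φ pb x) xb)
    -- (ii) calmness from above of φ(·,x) at p̄, uniformly in x
    (hcalmabove : ∃ γ > (0:ℝ), ∃ rγ > (0:ℝ), ∀ p ∈ ball pb rγ, ∀ x ∈ ball xb rγ,
      φ p x - φ pb x ≤ γ * ‖p - pb‖)
    -- (iii) uniform metric subregularity type error bound
    (hmsr : ∃ β > (0:ℝ), ∃ rβ > (0:ℝ), ∀ x ∈ ball xb rβ,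
      infEdist pb {q : P | F q x ⊆ C} ≤ ENNReal.ofReal β * exc pb x)
    -- (iv) problem calmness at x̄
    (hcalm : ∃ r > (0:ℝ), ∃ μ > (0:ℝ), ∀ p ∈ ball pb r, p ≠ pb →
      ∀ x ∈ ball xb r ∩ S p, φ p x - φ pb xb ≥ -μ * ‖p - pb‖) :
    ∃ lamStar : ℝ, 0 ≤ lamStar ∧ ∀ lam : ℝ, lamStar < lam →
      ∃ ρ > (0:ℝ), ∀ x ∈ ball xb ρ,
        (φ pb xb : EReal) + (ENNReal.ofReal lam * exc pb xb : ℝ≥0∞)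
          ≤ (φ pb x : EReal) + (ENNReal.ofReal lam * exc pb x : ℝ≥0∞) := by
  obtain ⟨ρ₀, hρ₀, hmin⟩ := hlocmin
  obtain ⟨γ, hγ, rγ, hrγ, hab⟩ := hcalmabove
  obtain ⟨β, hβ, rβ, hrβ, hms⟩ := hmsr
  obtain ⟨r, hr, μ, hμ, hcal⟩ := hcalm
  have hfeas' : F pb xb ⊆ C := by rwa [hS] at hfeas
  have hexc0 : exc pb xb = 0 := by
    rw [hexc]
    refine le_antisymm (iSup₂_le fun y hy => ?_) zero_le
    simp [Metric.infDist_zero_of_mem (hfeas' hy)]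
  refine ⟨β * (γ + μ), by positivity, fun lam hlam => ?_⟩
  have hlam0 : 0 < lam := lt_of_le_of_lt (by positivity) hlam
  set m := min r rγ with hm
  have hm0 : 0 < m := lt_min hr hrγ
  set e₀ := m / (2 * (β + 1)) with he₀
  have he₀0 : 0 < e₀ := by positivity
  have hbe : β * e₀ ≤ m / 2 := by
    rw [he₀, ← mul_div_assoc, div_le_div_iff₀ (by positivity) (by norm_num)]
    nlinarith [hm0.le, hβ.le]
  have hlt : φ pb xb - lam * e₀ < φ pb xb := by nlinarith
  obtain ⟨δ, hδ0, hδ⟩ := Metric.eventually_nhds_iff.mp (hlsc _ hlt)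
  refine ⟨min (min ρ₀ δ) (min m rβ), by positivity, fun x hx => ?_⟩
  rw [Metric.mem_ball] at hx
  have hxρ₀ : dist x xb < ρ₀ := lt_of_lt_of_le hx (le_trans (min_le_left _ _) (min_le_left _ _))
  have hxδ : dist x xb < δ := lt_of_lt_of_le hx (le_trans (min_le_left _ _) (min_le_right _ _))
  have hxm : dist x xb < m := lt_of_lt_of_le hx (le_trans (min_le_right _ _) (min_le_left _ _))
  have hxrβ : dist x xb < rβ := lt_of_lt_of_le hx (le_trans (min_le_right _ _) (min_le_right _ _))
  have hxr : dist x xb < r := lt_of_lt_of_le hxm (min_le_left _ _)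
  have hxrγ : dist x xb < rγ := lt_of_lt_of_le hxm (min_le_right _ _)
  rw [hexc0]
  simp only [mul_zero, EReal.coe_ennreal_zero, add_zero]
  by_cases hxS : x ∈ S pb
  · -- feasible: excess is zero and use local minimality
    have hFx : F pb x ⊆ C := by rwa [hS] at hxS
    have hex0 : exc pb x = 0 := by
      rw [hexc]
      refine le_antisymm (iSup₂_le fun y hy => ?_) zero_le
      simp [Metric.infDist_zero_of_mem (hFx hy)]
    rw [hex0]
    simp only [mul_zero, EReal.coe_ennreal_zero, add_zero]
    exact_mod_cast hmin x ⟨hxS, Metric.mem_ball.mpr hxρ₀⟩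
  · have hTpb : pb ∉ {q : P | F q x ⊆ C} := by
      intro h
      exact hxS (by rw [hS]; exact h)
    by_cases htop : exc pb x = ⊤
    · rw [htop, ENNReal.mul_top (by simpa using hlam0)]
      simp only [EReal.coe_ennreal_top]
      rw [EReal.add_top_of_ne_bot (EReal.coe_ne_bot _)]
      exact le_top
    · set E := (exc pb x).toReal with hEdef
      have hE0 : (0:ℝ) ≤ E := ENNReal.toReal_nonneg
      have hE : exc pb x = ENNReal.ofReal E := (ENNReal.ofReal_toReal htop).symm
      have hreal : φ pb xb ≤ φ pb x + lam * E := by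
        by_cases hEe₀ : E ≤ e₀
        · -- penalty argument via calmness
          have key : ∀ ε : ℝ, 0 < ε → ε ≤ m / 2 →
              φ pb xb ≤ φ pb x + (γ + μ) * (β * E) + (γ + μ) * ε := by
            intro ε hε hεm
            have h1 := hms x (Metric.mem_ball.mpr hxrβ)
            rw [hE, ← ENNReal.ofReal_mul hβ.le] at h1
            have h2 : infEdist pb {q : P | F q x ⊆ C} < ENNReal.ofReal (β * E + ε) :=
              lt_of_le_of_lt h1 ((ENNReal.ofReal_lt_ofReal_iff (by positivity)).mpr
                (by linarith))
            obtain ⟨p, hpT, hpd⟩ := EMetric.infEdist_lt_iff.mp h2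
            have hdp : dist pb p < β * E + ε := by
              rwa [edist_dist, ENNReal.ofReal_lt_ofReal_iff (by positivity)] at hpd
            have hdpm : dist pb p < m := by
              have hβE : β * E ≤ β * e₀ := by nlinarith
              linarith
            have hpr : p ∈ ball pb r := by
              rw [Metric.mem_ball, dist_comm]
              exact lt_of_lt_of_le hdpm (min_le_left _ _)
            have hprγ : p ∈ ball pb rγ := by
              rw [Metric.mem_ball, dist_comm]
              exact lt_of_lt_of_le hdpm (min_le_right _ _)
            have hpne : p ≠ pb := fun h => hTpb (h ▸ hpT)
            have hc1 := hcal p hpr hpne x ⟨Metric.mem_ball.mpr hxr, by rw [hS]; exact hpT⟩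
            have hc2 := hab p hprγ x (Metric.mem_ball.mpr hxrγ)
            have hnrm : ‖p - pb‖ < β * E + ε := by rwa [← dist_eq_norm, dist_comm]
            have hnrm0 : (0:ℝ) ≤ ‖p - pb‖ := norm_nonneg _
            nlinarith [hc1, hc2, hγ.le, hμ.le]
          have h3 : φ pb xb ≤ φ pb x + (γ + μ) * (β * E) := by
            refine le_of_forall_pos_le_add fun ε hε => ?_
            have hε' : 0 < min (ε / (γ + μ)) (m / 2) :=
              lt_min (by positivity) (by positivity)
            have hk := key _ hε' (min_le_right _ _)
            have hmono : (γ + μ) * min (ε / (γ + μ)) (m / 2) ≤ ε := by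
              calc (γ + μ) * min (ε / (γ + μ)) (m / 2)
                  ≤ (γ + μ) * (ε / (γ + μ)) :=
                    mul_le_mul_of_nonneg_left (min_le_left _ _) (by positivity)
                _ = ε := mul_div_cancel₀ _ (by positivity)
            linarith
          nlinarith [hlam.le]
        · push_neg at hEe₀
          have := hδ hxδ
          simp only at this
          nlinarith [hlam0.le]
      have hRHS : ((ENNReal.ofReal lam * exc pb x : ℝ≥0∞) : EReal)
          = ((lam * E : ℝ) : EReal) := by
        rw [hE, ← ENNReal.ofReal_mul hlam0.le, EReal.coe_ennreal_ofReal,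
          max_eq_left (mul_nonneg hlam0.le hE0)]
      rw [hRHS, ← EReal.coe_add]
      exact_mod_cast hreal
end

section
/- If two closed convex sets A, B in a normed space satisfy 0 ∈ int(A − B), then the pair (A, B) is subtransversal at every point x̄ ∈ A ∩ B: there exist κ > 0 and r > 0 such that dist(x, A ∩ B) ≤ κ·max{dist(x, A), dist(x, B)} for all x ∈ B(x̄, r). -/
open Metric Pointwise Set

lemma series_lemma {X : Type*} [NormedAddCommGroup X] [NormedSpace ℝ X] [CompleteSpace X]
    (P Q : Set X) (hPcl : IsClosed P) (hQcl : IsClosed Q)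
    (hPconv : Convex ℝ P) (hQconv : Convex ℝ Q)
    (M : ℝ) (hPb : ∀ p ∈ P, ‖p‖ ≤ M) (hQb : ∀ q ∈ Q, ‖q‖ ≤ M)
    (ε : ℝ) (hε : 0 < ε) (hcl : closedBall (0:X) ε ⊆ closure (P - Q)) :
    ∀ u : X, ‖u‖ ≤ ε/2 → u ∈ P - Q := by
  classical
  intro u hu
  -- P, Q nonempty
  have h0cl : (0:X) ∈ closure (P - Q) := hcl (by simp [hε.le])
  obtain ⟨c0, hc0⟩ : (P - Q).Nonempty := by
    rw [← closure_nonempty_iff]; exact ⟨0, h0cl⟩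
  obtain ⟨p0, hp0, q0, hq0, hpq0⟩ := Set.mem_sub.1 hc0
  -- pick function
  have pick : ∀ y : X, ‖y‖ ≤ ε → ∃ pq : X × X, pq.1 ∈ P ∧ pq.2 ∈ Q ∧
      ‖y - (pq.1 - pq.2)‖ ≤ ε/2 := by
    intro y hy
    have : y ∈ closure (P - Q) := hcl (by simpa [Metric.mem_closedBall, dist_zero_right] using hy)
    rw [Metric.mem_closure_iff] at this
    obtain ⟨c, hc, hdc⟩ := this (ε/2) (by linarith)
    obtain ⟨p, hp, q, hq, rfl⟩ := Set.mem_sub.1 hc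
    exact ⟨(p, q), hp, hq, by rw [dist_eq_norm] at hdc; exact hdc.le⟩
  let f : X → X × X := fun y => if h : ‖y‖ ≤ ε then (pick y h).choose else (p0, q0)
  have hf : ∀ y, ‖y‖ ≤ ε → (f y).1 ∈ P ∧ (f y).2 ∈ Q ∧
      ‖y - ((f y).1 - (f y).2)‖ ≤ ε/2 := by
    intro y hy
    simp only [f, dif_pos hy]
    exact (pick y hy).choose_spec
  -- residual sequence
  let r : ℕ → X := fun k => Nat.rec u
    (fun k rk => rk - ((2:ℝ)⁻¹)^(k+1) •
      ((f ((2:ℝ)^(k+1) • rk)).1 - (f ((2:ℝ)^(k+1) • rk)).2)) k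
  set p : ℕ → X := fun k => (f ((2:ℝ)^(k+1) • r k)).1 with hp_def
  set q : ℕ → X := fun k => (f ((2:ℝ)^(k+1) • r k)).2 with hq_def
  have hr0 : r 0 = u := rfl
  have hrsucc : ∀ k, r (k+1) = r k - ((2:ℝ)⁻¹)^(k+1) • (p k - q k) := fun k => rfl
  -- norm invariant
  have hrnorm : ∀ k, ‖r k‖ ≤ ε / 2^(k+1) := by
    intro k
    induction k with
    | zero => simpa [hr0] using hu
    | succ k ih =>
      have hyk : ‖(2:ℝ)^(k+1) • r k‖ ≤ ε := by
        rw [norm_smul, Real.norm_eq_abs, abs_of_pos (by positivity : (0:ℝ) < (2:ℝ)^(k+1))]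
        calc (2:ℝ)^(k+1) * ‖r k‖ ≤ (2:ℝ)^(k+1) * (ε / 2^(k+1)) := by
              exact mul_le_mul_of_nonneg_left ih (by positivity)
          _ = ε := by field_simp
      have := (hf _ hyk).2.2
      have hinv : ((2:ℝ)⁻¹)^(k+1) • ((2:ℝ)^(k+1) • r k) = r k := by
        rw [smul_smul, ← mul_pow]; simp
      have heq : r (k+1) = ((2:ℝ)⁻¹)^(k+1) • ((2:ℝ)^(k+1) • r k - (p k - q k)) := by
        rw [smul_sub, hinv]
      rw [heq, norm_smul, Real.norm_eq_abs, abs_of_pos (by positivity : (0:ℝ) < ((2:ℝ)⁻¹)^(k+1))]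
      calc ((2:ℝ)⁻¹)^(k+1) * ‖(2:ℝ)^(k+1) • r k - (p k - q k)‖
          ≤ ((2:ℝ)⁻¹)^(k+1) * (ε/2) := mul_le_mul_of_nonneg_left this (by positivity)
        _ ≤ ε / 2^(k+1+1) := le_of_eq (by rw [inv_pow, pow_succ]; field_simp; ring)
  have hmem : ∀ k, p k ∈ P ∧ q k ∈ Q := by
    intro k
    have hyk : ‖(2:ℝ)^(k+1) • r k‖ ≤ ε := by
      rw [norm_smul, Real.norm_eq_abs, abs_of_pos (by positivity : (0:ℝ) < (2:ℝ)^(k+1))]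
      calc (2:ℝ)^(k+1) * ‖r k‖ ≤ (2:ℝ)^(k+1) * (ε / 2^(k+1)) :=
            mul_le_mul_of_nonneg_left (hrnorm k) (by positivity)
        _ = ε := by field_simp
    exact ⟨(hf _ hyk).1, (hf _ hyk).2.1⟩
  set w : ℕ → ℝ := fun k => ((2:ℝ)⁻¹)^(k+1) with hw_def
  have hw_pos : ∀ k, 0 < w k := fun k => by positivity
  have hM0 : (0:ℝ) ≤ M := le_trans (norm_nonneg p0) (hPb p0 hp0)
  have hsum_geo : Summable (fun k : ℕ => ((2:ℝ)⁻¹)^k * M) :=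
    (summable_geometric_of_lt_one (by norm_num) (by norm_num)).mul_right M
  have key : ∀ (z : ℕ → X), (∀ k, ‖z k‖ ≤ M) → Summable (fun k => w k • z k) := by
    intro z hz
    apply Summable.of_norm_bounded hsum_geo
    intro k
    rw [norm_smul, Real.norm_eq_abs, abs_of_pos (hw_pos k)]
    calc w k * ‖z k‖ ≤ w k * M := mul_le_mul_of_nonneg_left (hz k) (hw_pos k).le
      _ ≤ ((2:ℝ)⁻¹)^k * M := by
          apply mul_le_mul_of_nonneg_right _ hM0
          exact pow_le_pow_of_le_one (by norm_num) (by norm_num) (Nat.le_succ k)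
  obtain ⟨a, ha⟩ := key p (fun k => hPb _ (hmem k).1)
  obtain ⟨b, hb⟩ := key q (fun k => hQb _ (hmem k).2)
  have haT : Filter.Tendsto (fun n => ∑ k ∈ Finset.range n, w k • p k)
      Filter.atTop (nhds a) := ha.tendsto_sum_nat
  have hbT : Filter.Tendsto (fun n => ∑ k ∈ Finset.range n, w k • q k)
      Filter.atTop (nhds b) := hb.tendsto_sum_nat
  have hpartial : ∀ n, ∑ k ∈ Finset.range n, w k • (p k - q k) = u - r n := by
    intro n
    induction n with
    | zero => simp [hr0]
    | succ n ih => rw [Finset.sum_range_succ, ih, hrsucc n]; abel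
  have hrT : Filter.Tendsto r Filter.atTop (nhds 0) := by
    have hg : Filter.Tendsto (fun n : ℕ => ε * ((2:ℝ)⁻¹)^n) Filter.atTop (nhds 0) := by
      simpa using (tendsto_pow_atTop_nhds_zero_of_lt_one (by norm_num : (0:ℝ) ≤ 2⁻¹)
        (by norm_num)).const_mul ε
    apply squeeze_zero_norm _ hg
    intro n
    calc ‖r n‖ ≤ ε / 2^(n+1) := hrnorm n
      _ ≤ ε * ((2:ℝ)⁻¹)^n := by
          rw [div_eq_mul_inv, ← inv_pow]
          exact mul_le_mul_of_nonneg_left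
            (pow_le_pow_of_le_one (by norm_num) (by norm_num) (Nat.le_succ n)) hε.le
  have hdiffT : Filter.Tendsto (fun n => u - r n) Filter.atTop (nhds (a - b)) := by
    have heq : ∀ n, u - r n = (∑ k ∈ Finset.range n, w k • p k)
        - (∑ k ∈ Finset.range n, w k • q k) := by
      intro n
      rw [← hpartial n, ← Finset.sum_sub_distrib]
      exact Finset.sum_congr rfl (fun k _ => smul_sub _ _ _)
    simp_rw [heq]
    exact haT.sub hbT
  have hu2 : Filter.Tendsto (fun n : ℕ => u - r n) Filter.atTop (nhds u) := by
    simpa using Filter.Tendsto.sub (tendsto_const_nhds (x := u)) hrT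
  have hab : a - b = u := tendsto_nhds_unique hdiffT hu2
  -- membership of a in P and b in Q
  have hσ : ∀ n : ℕ, ∑ k ∈ Finset.range n, w k = 1 - (2⁻¹:ℝ)^n := by
    intro n
    induction n with
    | zero => simp
    | succ n ih => rw [Finset.sum_range_succ, ih, pow_succ]; simp [w]; ring
  have hmem_lim : ∀ (z : ℕ → X) (c : X) (S : Set X), IsClosed S → Convex ℝ S →
      (∀ k, z k ∈ S) →
      Filter.Tendsto (fun n => ∑ k ∈ Finset.range n, w k • z k) Filter.atTop (nhds c) →
      c ∈ S := by
    intro z c S hScl hSconv hzS hT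
    have hσpos : ∀ n : ℕ, 0 < 1 - (2⁻¹:ℝ)^(n+1) := by
      intro n
      have : (2⁻¹:ℝ)^(n+1) < 1 := pow_lt_one₀ (by norm_num) (by norm_num) n.succ_ne_zero
      linarith
    have hyS : ∀ n : ℕ,
        (1 - (2⁻¹:ℝ)^(n+1))⁻¹ • ∑ k ∈ Finset.range (n+1), w k • z k ∈ S := by
      intro n
      rw [Finset.smul_sum]
      simp_rw [smul_smul]
      apply hSconv.sum_mem
      · intro k _
        exact mul_nonneg (inv_nonneg.2 (hσpos n).le) (hw_pos k).le
      · rw [← Finset.mul_sum, hσ]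
        exact inv_mul_cancel₀ (hσpos n).ne'
      · intro k _; exact hzS k
    have hscal : Filter.Tendsto (fun n : ℕ => (1 - (2⁻¹:ℝ)^(n+1))⁻¹)
        Filter.atTop (nhds 1) := by
      have h1 : Filter.Tendsto (fun n : ℕ => 1 - (2⁻¹:ℝ)^(n+1)) Filter.atTop (nhds 1) := by
        have := (tendsto_pow_atTop_nhds_zero_of_lt_one
          (by norm_num : (0:ℝ) ≤ 2⁻¹) (by norm_num)).comp
          (Filter.tendsto_add_atTop_nat 1)
        simpa using Filter.Tendsto.sub (tendsto_const_nhds (x := (1:ℝ))) this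
      simpa using h1.inv₀ (by norm_num)
    have hST : Filter.Tendsto
        (fun n : ℕ => (1 - (2⁻¹:ℝ)^(n+1))⁻¹ • ∑ k ∈ Finset.range (n+1), w k • z k)
        Filter.atTop (nhds c) := by
      have := hscal.smul (hT.comp (Filter.tendsto_add_atTop_nat 1))
      simpa using this
    exact hScl.mem_of_tendsto hST (Filter.Eventually.of_forall hyS)
  have haP : a ∈ P := hmem_lim p a P hPcl hPconv (fun k => (hmem k).1) haT
  have hbQ : b ∈ Q := hmem_lim q b Q hQcl hQconv (fun k => (hmem k).2) hbT
  rw [← hab]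
  exact Set.sub_mem_sub haP hbQ

lemma baire_lemma {X : Type*} [NormedAddCommGroup X] [NormedSpace ℝ X] [CompleteSpace X]
    (A B : Set X) (hAconv : Convex ℝ A) (hBconv : Convex ℝ B)
    (xb : X) (hxA : xb ∈ A) (hxB : xb ∈ B)
    (h0 : (0 : X) ∈ interior (A - B)) :
    ∃ N : ℕ, ∃ ε > (0:ℝ), closedBall (0:X) ε ⊆
      closure ((A ∩ closedBall xb N) - (B ∩ closedBall xb N)) := by
  classical
  set D : ℕ → Set X := fun n => (A ∩ closedBall xb n) - (B ∩ closedBall xb n) with hD_def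
  have hD0 : ∀ n : ℕ, (0:X) ∈ D n := by
    intro n
    have hxball : xb ∈ closedBall xb n := by
      simp [Metric.mem_closedBall]
    have h1 : xb - xb ∈ D n :=
      Set.sub_mem_sub (⟨hxA, hxball⟩ : xb ∈ A ∩ closedBall xb n) ⟨hxB, hxball⟩
    simpa using h1
  have hDconv : ∀ n, Convex ℝ (D n) :=
    fun n => (hAconv.inter (convex_closedBall _ _)).sub (hBconv.inter (convex_closedBall _ _))
  have hDmono : ∀ {n m : ℕ}, n ≤ m → D n ⊆ D m := by
    intro n m hnm
    apply Set.sub_subset_sub <;>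
      exact Set.inter_subset_inter_right _ (closedBall_subset_closedBall (by exact_mod_cast hnm))
  have hDscale : ∀ (n : ℕ) (c : ℝ), 0 ≤ c → c ≤ 1 → ∀ x ∈ D n, c • x ∈ D n :=
    fun n c hc0 hc1 x hx => (hDconv n).smul_mem_of_zero_mem (hD0 n) hx ⟨hc0, hc1⟩
  obtain ⟨δ, hδ, hball⟩ : ∃ δ > (0:ℝ), ball (0:X) δ ⊆ A - B := by
    rw [mem_interior_iff_mem_nhds, Metric.mem_nhds_iff] at h0
    obtain ⟨δ, hδ, h⟩ := h0
    exact ⟨δ, hδ, h⟩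
  -- every point has a scaled representative in some D n
  have hrepr : ∀ x : X, ∃ m n : ℕ, ((m:ℝ)+1)⁻¹ • x ∈ D n := by
    intro x
    obtain ⟨m, hm⟩ := exists_nat_gt (‖x‖ / δ)
    have hm1 : (0:ℝ) < (m:ℝ) + 1 := by positivity
    have hy : ‖((m:ℝ)+1)⁻¹ • x‖ < δ := by
      rw [norm_smul, Real.norm_eq_abs, abs_of_pos (inv_pos.2 hm1)]
      rw [inv_mul_lt_iff₀ hm1]
      have : ‖x‖ < (m:ℝ) * δ := by
        rw [div_lt_iff₀ hδ] at hm
        linarith [hm]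
      nlinarith [hδ]
    obtain ⟨a, ha, b, hb, hab⟩ := Set.mem_sub.1 (hball (by simpa [Metric.mem_ball, dist_zero_right] using hy))
    refine ⟨m, max ⌈dist a xb⌉₊ ⌈dist b xb⌉₊, ?_⟩
    rw [← hab]
    apply Set.sub_mem_sub
    · refine ⟨ha, ?_⟩
      rw [Metric.mem_closedBall]
      calc dist a xb ≤ (⌈dist a xb⌉₊ : ℝ) := Nat.le_ceil _
        _ ≤ _ := by exact_mod_cast Nat.le_max_left _ _
    · refine ⟨hb, ?_⟩
      rw [Metric.mem_closedBall]
      calc dist b xb ≤ (⌈dist b xb⌉₊ : ℝ) := Nat.le_ceil _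
        _ ≤ _ := by exact_mod_cast Nat.le_max_right _ _
  have hcover : ∀ x : X, ∃ n : ℕ, x ∈ closure (((n:ℝ)+1) • D n) := by
    intro x
    obtain ⟨m, n, hmem⟩ := hrepr x
    refine ⟨max m n, subset_closure ?_⟩
    have hn1 : (0:ℝ) < (max m n : ℕ) + 1 := by positivity
    have hc01 : (0:ℝ) ≤ ((m:ℝ)+1) / (((max m n : ℕ):ℝ)+1) := by positivity
    have hc1 : ((m:ℝ)+1) / (((max m n : ℕ):ℝ)+1) ≤ 1 := by
      rw [div_le_one (by positivity)]
      have : (m:ℝ) ≤ ((max m n : ℕ):ℝ) := by exact_mod_cast Nat.le_max_left m n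
      linarith
    have hmem' : (((m:ℝ)+1) / (((max m n : ℕ):ℝ)+1)) • (((m:ℝ)+1)⁻¹ • x) ∈ D (max m n) := by
      apply hDscale _ _ (by positivity) hc1
      exact hDmono (Nat.le_max_right m n) hmem
    have := Set.smul_mem_smul_set (a := (((max m n : ℕ):ℝ)+1)) hmem'
    convert this using 1
    rw [smul_smul, smul_smul]
    congr 1
    have hm1 : ((m:ℝ)+1) ≠ 0 := by positivity
    field_simp
    rw [one_smul]
  -- Baire category
  haveI : Nonempty X := ⟨xb⟩
  obtain ⟨N₀, hN₀⟩ := nonempty_interior_of_iUnion_of_closed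
    (f := fun n : ℕ => closure (((n:ℝ)+1) • D n)) (fun n => isClosed_closure)
    (Set.eq_univ_iff_forall.2 (fun x => Set.mem_iUnion.2 (hcover x)))
  -- transfer interior to closure (D N₀)
  have hNne : ((N₀:ℝ)+1) ≠ 0 := by positivity
  have htrans : (interior (closure (D N₀))).Nonempty := by
    rw [closure_smul₀, interior_smul₀ hNne] at hN₀
    obtain ⟨y, v, hv, rfl⟩ := hN₀
    exact ⟨v, hv⟩
  obtain ⟨v, hv⟩ := htrans
  obtain ⟨ρ, hρ, hρball⟩ : ∃ ρ > (0:ℝ), ball v ρ ⊆ closure (D N₀) :=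
    Metric.mem_nhds_iff.1 (mem_interior_iff_mem_nhds.1 hv)
  obtain ⟨m, n₁, hvmem⟩ := hrepr (-v)
  set N : ℕ := max N₀ n₁ with hN_def
  have hm2 : (0:ℝ) < (m:ℝ) + 2 := by positivity
  have hm1 : (0:ℝ) < (m:ℝ) + 1 := by positivity
  refine ⟨N, ρ / (2*((m:ℝ)+2)), by positivity, ?_⟩
  intro w hw
  rw [Metric.mem_closedBall, dist_zero_right] at hw
  set θ : ℝ := ((m:ℝ)+2)⁻¹ with hθdef
  have hθpos : 0 < θ := by positivity
  have hθle : θ ≤ 1 := by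
    rw [hθdef]
    rw [inv_le_one_iff₀]
    right; linarith
  have hz : v + ((m:ℝ)+2) • w ∈ closure (D N₀) := by
    apply hρball
    rw [Metric.mem_ball, dist_eq_norm]
    have heqn : ‖v + ((m:ℝ)+2) • w - v‖ = ((m:ℝ)+2) * ‖w‖ := by
      simp [norm_smul, abs_of_pos hm2]
    rw [heqn]
    calc ((m:ℝ)+2) * ‖w‖ ≤ ((m:ℝ)+2) * (ρ / (2*((m:ℝ)+2))) :=
          mul_le_mul_of_nonneg_left hw hm2.le
      _ = ρ/2 := by field_simp
      _ < ρ := by linarith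
  have hzN : v + ((m:ℝ)+2) • w ∈ closure (D N) :=
    closure_mono (hDmono (Nat.le_max_left _ _)) hz
  have hy1 : ((m:ℝ)+1)⁻¹ • (-v) ∈ closure (D N) :=
    subset_closure (hDmono (Nat.le_max_right N₀ n₁) hvmem)
  have hcomb := ((hDconv N).closure) hzN hy1 hθpos.le
    (by linarith : (0:ℝ) ≤ 1 - θ) (by ring)
  have heq : θ • (v + ((m:ℝ)+2) • w) + (1 - θ) • (((m:ℝ)+1)⁻¹ • (-v)) = w := by
    have h1 : θ • (((m:ℝ)+2) • w) = w := by
      rw [smul_smul, hθdef, inv_mul_cancel₀ hm2.ne', one_smul]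
    have hscal : (1 - θ) * ((m:ℝ)+1)⁻¹ = θ := by
      rw [hθdef]
      field_simp
      ring
    have h2 : (1 - θ) • (((m:ℝ)+1)⁻¹ • (-v)) = -(θ • v) := by
      rw [smul_smul, hscal, smul_neg]
    rw [smul_add, h1, h2]
    abel
  rwa [heq] at hcomb

lemma key_lemma {X : Type*} [NormedAddCommGroup X] [NormedSpace ℝ X] [CompleteSpace X]
    (A B : Set X) (hAcl : IsClosed A) (hBcl : IsClosed B)
    (hAconv : Convex ℝ A) (hBconv : Convex ℝ B)
    (xb : X) (hxA : xb ∈ A) (hxB : xb ∈ B)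
    (h0 : (0 : X) ∈ interior (A - B)) :
    ∃ K ≥ (0:ℝ), ∃ ε > (0:ℝ), ∀ u : X, ‖u‖ ≤ ε →
      ∃ a ∈ A ∩ closedBall xb K, ∃ b ∈ B ∩ closedBall xb K, a - b = u := by
  obtain ⟨N, ε, hε, hsub⟩ := baire_lemma A B hAconv hBconv xb hxA hxB h0
  refine ⟨N, Nat.cast_nonneg N, ε/2, by positivity, ?_⟩
  intro u hu
  have hmem := series_lemma (A ∩ closedBall xb N) (B ∩ closedBall xb N)
    (hAcl.inter isClosed_closedBall) (hBcl.inter isClosed_closedBall)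
    (hAconv.inter (convex_closedBall _ _)) (hBconv.inter (convex_closedBall _ _))
    (‖xb‖ + N)
    (fun p hp => norm_le_of_mem_closedBall hp.2)
    (fun q hq => norm_le_of_mem_closedBall hq.2)
    ε hε hsub u hu
  obtain ⟨a, ha, b, hb, hab⟩ := Set.mem_sub.1 hmem
  exact ⟨a, ha, b, hb, hab⟩

/-- If two nonempty closed convex sets `A, B` in a Banach space satisfy
`0 ∈ int(A − B)`, then the pair `(A, B)` is subtransversal at every point of
`A ∩ B`: a local linear error bound for the intersection holds. -/
theorem stmt_18 {X : Type*} [NormedAddCommGroup X] [NormedSpace ℝ X]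
    [CompleteSpace X]
    (A B : Set X) (hAne : A.Nonempty) (hBne : B.Nonempty)
    (hAcl : IsClosed A) (hBcl : IsClosed B)
    (hAconv : Convex ℝ A) (hBconv : Convex ℝ B)
    (h0 : (0 : X) ∈ interior (A - B)) :
    ∀ xb ∈ A ∩ B, ∃ κ > (0:ℝ), ∃ r > (0:ℝ), ∀ x ∈ closedBall xb r,
      infDist x (A ∩ B) ≤ κ * max (infDist x A) (infDist x B) := by
  intro xb hxb
  obtain ⟨hxA, hxB⟩ := hxb
  obtain ⟨K, hK0, δ, hδ, hkey⟩ := key_lemma A B hAcl hBcl hAconv hBconv xb hxA hxB h0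
  set κ : ℝ := 1 + 2*(1+K)/δ with hκdef
  have hκ1 : 1 ≤ κ := by
    rw [hκdef]
    have : 0 ≤ 2*(1+K)/δ := by positivity
    linarith
  have hκpos : (0:ℝ) < κ := lt_of_lt_of_le one_pos hκ1
  refine ⟨κ, hκpos, 1, one_pos, ?_⟩
  intro x hx
  rw [Metric.mem_closedBall] at hx
  set d : ℝ := max (infDist x A) (infDist x B) with hd_def
  have hd0 : 0 ≤ d := le_trans infDist_nonneg (le_max_left _ _)
  apply le_of_forall_pos_le_add
  intro η' hη'
  set η : ℝ := η'/κ with hη_def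
  have hηpos : 0 < η := by positivity
  obtain ⟨a, haA, hax⟩ := (infDist_lt_iff hAne).1
    (lt_of_le_of_lt (le_max_left _ _) (by linarith : d < d + η))
  obtain ⟨b, hbB, hbx⟩ := (infDist_lt_iff hBne).1
    (lt_of_le_of_lt (le_max_right _ _) (by linarith : d < d + η))
  by_cases hab : a = b
  · have hmem : a ∈ A ∩ B := ⟨haA, hab ▸ hbB⟩
    have h1 : infDist x (A ∩ B) ≤ dist x a := infDist_le_dist_of_mem hmem
    have h2 : d ≤ κ * d := by nlinarith
    have h3 : η ≤ η' := by
      rw [hη_def, div_le_iff₀ hκpos]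
      nlinarith
    linarith
  · have hs : (0:ℝ) < ‖a - b‖ := by rwa [norm_pos_iff, sub_ne_zero]
    set s : ℝ := ‖a - b‖ with hs_def
    set u : X := (δ/s) • (b - a) with hu_def
    have hunorm : ‖u‖ ≤ δ := by
      rw [hu_def, norm_smul, Real.norm_eq_abs, abs_of_pos (by positivity : (0:ℝ) < δ/s),
        norm_sub_rev]
      rw [← hs_def, div_mul_cancel₀ _ hs.ne']
    obtain ⟨a', ⟨ha'A, ha'ball⟩, b', ⟨hb'B, _⟩, hab'⟩ := hkey u hunorm
    set t : ℝ := s/(s+δ) with ht_def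
    have hts : (0:ℝ) < s + δ := by linarith
    have ht0 : (0:ℝ) ≤ t := by positivity
    have ht1 : t ≤ 1 := by rw [ht_def, div_le_one hts]; linarith
    set wpt : X := (1-t) • a + t • a' with hw_def
    have hwA : wpt ∈ A := hAconv haA ha'A (by linarith) ht0 (by ring)
    have hwB : wpt ∈ B := by
      have h1 : a' = b' + u := by rw [← hab']; abel
      have h2 : t • ((δ/s) • (b - a)) = (1-t) • (b - a) := by
        rw [smul_smul]
        congr 1
        rw [ht_def]
        field_simp
        ring
      have hwpt_eq : wpt = (1-t) • b + t • b' := by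
        rw [hw_def, h1, hu_def, smul_add, h2, smul_sub]
        abel
      rw [hwpt_eq]
      exact hBconv hbB hb'B (by linarith) ht0 (by ring)
    have htle : t ≤ 2*(d+η)/δ := by
      have hsle : s ≤ 2*(d+η) := by
        have h5 : s ≤ dist a x + dist x b := by
          rw [hs_def, ← dist_eq_norm]
          exact dist_triangle a x b
        rw [dist_comm a x] at h5
        linarith [hax, hbx]
      rw [ht_def, div_le_div_iff₀ hts hδ]
      nlinarith [hδ, hd0, hηpos, hs]
    have hxw : dist x wpt ≤ (d + η) * κ := by
      have hxdecomp : x - wpt = (1-t) • (x - a) + t • (x - a') := by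
        rw [hw_def]
        module
      rw [dist_eq_norm, hxdecomp]
      have hb1 : ‖x - a‖ ≤ d + η := by rw [← dist_eq_norm]; exact hax.le
      have hb2 : ‖x - a'‖ ≤ 1 + K := by
        have h4 : dist a' xb ≤ K := ha'ball
        calc ‖x - a'‖ = dist x a' := (dist_eq_norm _ _).symm
          _ ≤ dist x xb + dist xb a' := dist_triangle _ _ _
          _ ≤ 1 + K := by rw [dist_comm xb a']; linarith
      calc ‖(1-t) • (x - a) + t • (x - a')‖ ≤ (1-t) * ‖x - a‖ + t * ‖x - a'‖ := by
            refine (norm_add_le _ _).trans ?_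
            rw [norm_smul, norm_smul, Real.norm_eq_abs, Real.norm_eq_abs,
              abs_of_nonneg (by linarith : (0:ℝ) ≤ 1 - t), abs_of_nonneg ht0]
        _ ≤ 1 * (d + η) + (2*(d+η)/δ) * (1+K) := by
            have e1 : (1-t) * ‖x - a‖ ≤ 1 * (d + η) :=
              mul_le_mul (by linarith) hb1 (norm_nonneg _) one_pos.le
            have e2 : t * ‖x - a'‖ ≤ (2*(d+η)/δ) * (1+K) :=
              mul_le_mul htle hb2 (norm_nonneg _) (by positivity)
            linarith
        _ = (d + η) * κ := by rw [hκdef]; field_simp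
    have hfin : infDist x (A ∩ B) ≤ dist x wpt := infDist_le_dist_of_mem ⟨hwA, hwB⟩
    have heq : (d + η) * κ = κ * d + η' := by
      rw [hη_def]
      field_simp
    linarith
end
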